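/- Let f : S¹ → S¹ be an orientation-preserving circle homeomorphism topologically conjugate to an irrational rotation of angle θ, with unique invariant probability measure μ, and let τ : S¹ → (0,∞) be continuous with T := ∫ τ dμ. Suppose the Birkhoff sums along denominators q_n of the continued fraction convergents p_n/q_n of θ satisfy sup_{x∈S¹} |Σ_{l=0}^{q_n−1} τ(f^l(x)) − T q_n| → 0 as n → ∞ (Denjoy–Koksma type estimate). Then the suspension flow of f with roof function τ is not kinematic expansive. -/

import Mathlib

open Filter Topology Set MeasureTheory

section aux

variable {X : Type*} [TopologicalSpace X]

/-- ℤ-indexed iterate of a self-homeomorphism applied to a base point. -/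
noncomputable def ffit (f : X ≃ₜ X) (θ : X) (k : ℤ) : X :=
  if 0 ≤ k then (⇑f)^[k.toNat] θ else (⇑f.symm)^[(-k).toNat] θ

lemma ffit_zero (f : X ≃ₜ X) (θ : X) : ffit f θ 0 = θ := by simp [ffit]

lemma ffit_succ (f : X ≃ₜ X) (θ : X) (k : ℤ) : ffit f θ (k + 1) = f (ffit f θ k) := by
  rcases le_or_gt 0 k with hk | hk
  · have h1 : (0:ℤ) ≤ k + 1 := by omega
    have h2 : (k+1).toNat = k.toNat + 1 := by omega
    simp only [ffit, if_pos hk, if_pos h1, h2, Function.iterate_succ_apply']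
  · have key : ffit f θ (k+1) = (⇑f.symm)^[(-(k+1)).toNat] θ := by
      by_cases h1 : (0:ℤ) ≤ k + 1
      · have hk1 : k + 1 = 0 := by omega
        rw [hk1]
        simp [ffit]
      · simp [ffit, h1]
    have h2 : (-k).toNat = (-(k+1)).toNat + 1 := by omega
    have h3 : ffit f θ k = f.symm ((⇑f.symm)^[(-(k+1)).toNat] θ) := by
      simp only [ffit, if_neg (not_le.2 hk), h2, Function.iterate_succ_apply']
    rw [key, h3, Homeomorph.apply_symm_apply]

lemma ffit_add_nat (f : X ≃ₜ X) (θ : X) (k : ℤ) (l : ℕ) :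
    ffit f θ (k + l) = (⇑f)^[l] (ffit f θ k) := by
  induction l with
  | zero => simp
  | succ n ih =>
    have hc : (((n+1 : ℕ)) : ℤ) = (n : ℤ) + 1 := by push_cast; ring
    rw [hc, show k + ((n:ℤ) + 1) = (k + (n:ℤ)) + 1 by ring, ffit_succ, ih,
      Function.iterate_succ_apply']

/-- ℤ-indexed Birkhoff time cocycle of the roof function. -/
noncomputable def sst (f : X ≃ₜ X) (τ : X → ℝ) (θ : X) (k : ℤ) : ℝ :=
  (∑ l ∈ Finset.range k.toNat, τ (ffit f θ l)) -
    ∑ l ∈ Finset.range (-k).toNat, τ (ffit f θ (-(l:ℤ) - 1))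

lemma sst_zero (f : X ≃ₜ X) (τ : X → ℝ) (θ : X) : sst f τ θ 0 = 0 := by simp [sst]

lemma sst_succ (f : X ≃ₜ X) (τ : X → ℝ) (θ : X) (k : ℤ) :
    sst f τ θ (k + 1) = sst f τ θ k + τ (ffit f θ k) := by
  rcases le_or_gt 0 k with hk | hk
  · have h1 : (k+1).toNat = k.toNat + 1 := by omega
    have h2 : (-(k+1)).toNat = 0 := by omega
    have h3 : (-k).toNat = 0 := by omega
    have h4 : ((k.toNat : ℕ) : ℤ) = k := by omega
    simp only [sst, h1, h2, h3, Finset.range_zero, Finset.sum_empty, Finset.sum_range_succ, h4]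
    ring
  · have h1 : (k+1).toNat = 0 := by omega
    have h2 : k.toNat = 0 := by omega
    have h3 : (-k).toNat = (-(k+1)).toNat + 1 := by omega
    have h4 : -((((-(k+1)).toNat : ℕ)) : ℤ) - 1 = k := by omega
    simp only [sst, h1, h2, h3, Finset.range_zero, Finset.sum_empty, Finset.sum_range_succ, h4]
    ring

lemma sst_birkhoff (f : X ≃ₜ X) (τ : X → ℝ) (θ : X) (k : ℤ) (j : ℕ) :
    sst f τ θ (k + j) = sst f τ θ k + ∑ l ∈ Finset.range j, τ ((⇑f)^[l] (ffit f θ k)) := by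
  induction j with
  | zero => simp
  | succ n ih =>
    have hc : (((n+1 : ℕ)) : ℤ) = (n : ℤ) + 1 := by push_cast; ring
    rw [hc, show k + ((n:ℤ) + 1) = (k + (n:ℤ)) + 1 by ring, sst_succ, ih, ffit_add_nat,
      Finset.sum_range_succ]
    ring

end aux

/-- Let `f` be a circle homeomorphism conjugate to an irrational rotation with
unique invariant probability measure `μ`, and `τ > 0` a continuous roof function with mean
`T = ∫ τ dμ`. If the Birkhoff sums of `τ` along the continued-fraction denominators `q n`
satisfy the Denjoy–Koksma type estimate `sup_x |Σ_{l<q n} τ(f^l x) − T·q n| → 0`, then the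
suspension flow of `f` under `τ` is not kinematic expansive. -/
theorem stmt_14 {M : Type*} [MetricSpace M] [CompactSpace M]
    (φ : Flow ℝ M)
    (f : AddCircle (1 : ℝ) ≃ₜ AddCircle (1 : ℝ))
    (α : ℝ) (hα : Irrational α)
    (hconj : ∃ h : AddCircle (1 : ℝ) ≃ₜ AddCircle (1 : ℝ),
      ∀ x, h (f x) = (α : AddCircle (1 : ℝ)) + h x)
    (μ : Measure (AddCircle (1 : ℝ))) [IsProbabilityMeasure μ]
    (hμinv : Measure.map f μ = μ)
    (hμuniq : ∀ ν : Measure (AddCircle (1 : ℝ)), IsProbabilityMeasure ν →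
      Measure.map f ν = ν → ν = μ)
    (τ : AddCircle (1 : ℝ) → ℝ) (hτ : Continuous τ) (hτpos : ∀ θ, 0 < τ θ)
    -- the suspension structure: `ι` is a cross-section with return map `f` and return time `τ`
    (ι : AddCircle (1 : ℝ) → M) (hι : Continuous ι) (hιinj : Function.Injective ι)
    (hret : ∀ θ, φ (τ θ) (ι θ) = ι (f θ))
    (hmin : ∀ θ (t : ℝ), 0 < t → t < τ θ → φ t (ι θ) ∉ Set.range ι)
    (hcover : ∀ x : M, ∃ (θ : AddCircle (1 : ℝ)) (t : ℝ), φ t (ι θ) = x)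
    -- continued-fraction denominators of `α`
    (q : ℕ → ℕ) (p : ℕ → ℤ) (hq : ∀ n, 0 < q n) (hqmono : Tendsto q atTop atTop)
    (hconv : ∀ n, |α - (p n : ℝ) / (q n : ℝ)| < 1 / (q n : ℝ) ^ 2)
    -- the Denjoy–Koksma type estimate
    (hDK : Tendsto (fun n => ⨆ x : AddCircle (1 : ℝ),
        |(∑ l ∈ Finset.range (q n), τ (f^[l] x)) - (∫ y, τ y ∂μ) * (q n : ℝ)|)
      atTop (𝓝 0)) :
    ¬ (∀ ε : ℝ, 0 < ε → ∃ δ : ℝ, 0 < δ ∧ ∀ x y : M,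
        (∀ t : ℝ, dist (φ t x) (φ t y) < δ) → ∃ s : ℝ, |s| < ε ∧ y = φ s x) := by
  intro hexp
  haveI : Fact ((0:ℝ) < 1) := ⟨zero_lt_one⟩
  obtain ⟨h, hh⟩ := hconj
  -- iterates of the conjugacy
  have hiter : ∀ (l : ℕ) (z : AddCircle (1:ℝ)),
      h ((⇑f)^[l] z) = (((l : ℝ) * α : ℝ) : AddCircle (1:ℝ)) + h z := by
    intro l
    induction l with
    | zero => intro z; simp
    | succ n ih =>
      intro z
      rw [Function.iterate_succ_apply', hh, ih, ← add_assoc]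
      congr 1
      push_cast
      rw [show ((n:ℝ) + 1) * α = α + (n:ℝ) * α by ring, AddCircle.coe_add]
  -- min and max of the roof function
  have hne : (univ : Set (AddCircle (1:ℝ))).Nonempty := univ_nonempty
  obtain ⟨zm, -, hzm'⟩ := isCompact_univ.exists_isMinOn hne hτ.continuousOn
  obtain ⟨zM, -, hzM'⟩ := isCompact_univ.exists_isMaxOn hne hτ.continuousOn
  have hzm := isMinOn_iff.mp hzm'
  have hzM := isMaxOn_iff.mp hzM'
  set m := τ zm with hmdef
  set Mt := τ zM with hMtdef
  have hm0 : 0 < m := hτpos zm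
  have hmlow : ∀ z, m ≤ τ z := fun z => hzm z trivial
  have hMhigh : ∀ z, τ z ≤ Mt := fun z => hzM z trivial
  have hMt0 : 0 < Mt := lt_of_lt_of_le hm0 (hmlow zM)
  obtain ⟨δ, hδ0, hδ⟩ := hexp m hm0
  -- the base point
  set θ : AddCircle (1:ℝ) := 0 with hθdef
  -- cancellation in the flow
  have hcancel : ∀ (t : ℝ) (a b : M), φ t a = φ t b → a = b := by
    intro t a b hab
    have h1 : φ (-t) (φ t a) = φ (-t) (φ t b) := congrArg (φ (-t)) hab
    rw [← φ.map_add, ← φ.map_add, neg_add_cancel, φ.map_zero_apply, φ.map_zero_apply] at h1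
    exact h1
  -- the orbit identity
  have horb : ∀ k : ℤ, φ (sst f τ θ k) (ι θ) = ι (ffit f θ k) := by
    intro k
    induction k using Int.induction_on with
    | zero => rw [sst_zero, ffit_zero, φ.map_zero_apply]
    | succ k ih =>
      rw [sst_succ, add_comm, φ.map_add, ih, hret, ffit_succ]
    | pred k ih =>
      apply hcancel (τ (ffit f θ (-(k:ℤ) - 1)))
      have e1 : sst f τ θ (-(k:ℤ)) = sst f τ θ (-(k:ℤ) - 1) + τ (ffit f θ (-(k:ℤ)-1)) := by
        have h2 := sst_succ f τ θ (-(k:ℤ) - 1)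
        rw [sub_add_cancel] at h2
        exact h2
      calc φ (τ (ffit f θ (-(k:ℤ) - 1))) (φ (sst f τ θ (-(k:ℤ) - 1)) (ι θ))
          = φ (sst f τ θ (-(k:ℤ))) (ι θ) := by
            rw [← φ.map_add, e1]; ring_nf
        _ = ι (ffit f θ (-(k:ℤ))) := ih
        _ = φ (τ (ffit f θ (-(k:ℤ) - 1))) (ι (ffit f θ (-(k:ℤ) - 1))) := by
            rw [hret]
            have h3 := ffit_succ f θ (-(k:ℤ) - 1)
            rw [sub_add_cancel] at h3
            rw [h3]
  -- lower bounds for the cocycle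
  have hSnat : ∀ j : ℕ, m * j ≤ sst f τ θ (j : ℤ) := by
    intro j
    induction j with
    | zero => simp [sst_zero]
    | succ n ih =>
      have hc : (((n+1 : ℕ)) : ℤ) = (n : ℤ) + 1 := by push_cast; ring
      rw [hc, sst_succ]
      have := hmlow (ffit f θ (n:ℤ))
      push_cast
      nlinarith
  have hSneg : ∀ j : ℕ, sst f τ θ (-(j:ℤ)) ≤ -(m * j) := by
    intro j
    induction j with
    | zero => simp [sst_zero]
    | succ n ih =>
      have e1 : sst f τ θ (-(n:ℤ)) = sst f τ θ (-(n:ℤ) - 1) + τ (ffit f θ (-(n:ℤ) - 1)) := by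
        have h2 := sst_succ f τ θ (-(n:ℤ) - 1)
        rw [sub_add_cancel] at h2
        exact h2
      have hτb := hmlow (ffit f θ (-(n:ℤ) - 1))
      have hcast : -((n+1:ℕ):ℤ) = -(n:ℤ) - 1 := by push_cast; ring
      rw [hcast]
      push_cast
      linarith
  -- discretization of time
  have hfloor : ∀ t : ℝ, ∃ k : ℤ, sst f τ θ k ≤ t ∧ t < sst f τ θ (k+1) := by
    intro t
    have hwhole : ∀ z : ℤ, z ≤ 0 → sst f τ θ z ≤ m * z := by
      intro z hz
      have h1 : z = -(((-z).toNat : ℕ) : ℤ) := by omega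
      have h2 := hSneg (-z).toNat
      rw [← h1] at h2
      refine h2.trans (le_of_eq ?_)
      have h3 : (((-z).toNat : ℕ) : ℝ) = -(z : ℝ) := by
        have : (((-z).toNat : ℕ) : ℤ) = -z := by omega
        exact_mod_cast congrArg (fun w : ℤ => (w : ℝ)) this
      rw [h3]; ring
    have Hinh : ∃ z : ℤ, t < sst f τ θ z := by
      obtain ⟨j, hj⟩ : ∃ j : ℕ, t/m < j := exists_nat_gt _
      refine ⟨j, ?_⟩
      have h1 := hSnat j
      have h2 : t < m * j := by
        rw [div_lt_iff₀ hm0] at hj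
        nlinarith
      linarith
    have Hbdd : ∃ b : ℤ, ∀ z : ℤ, t < sst f τ θ z → b ≤ z := by
      refine ⟨min ⌊t/m⌋ 0, fun z hz => ?_⟩
      rcases le_or_gt 0 z with h0 | h0
      · exact le_trans (min_le_right _ _) h0
      · refine le_trans (min_le_left _ _) ?_
        have h1 := hwhole z h0.le
        have h2 : t/m < (z:ℝ) := by
          rw [div_lt_iff₀ hm0]
          nlinarith
        have h3 : (⌊t/m⌋ : ℝ) < (z : ℝ) := lt_of_le_of_lt (Int.floor_le _) h2
        exact_mod_cast h3.le
    obtain ⟨lb, hlb, hmin'⟩ := Int.exists_least_of_bdd Hbdd Hinh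
    refine ⟨lb - 1, ?_, by simpa using hlb⟩
    by_contra hcon
    push_neg at hcon
    have := hmin' _ hcon
    omega
  -- bound by the supremum in the DK estimate
  have hbdd : ∀ (n : ℕ) (x0 : AddCircle (1:ℝ)),
      |(∑ l ∈ Finset.range (q n), τ ((⇑f)^[l] x0)) - (∫ y, τ y ∂μ) * (q n : ℝ)|
        ≤ ⨆ x : AddCircle (1:ℝ),
            |(∑ l ∈ Finset.range (q n), τ ((⇑f)^[l] x)) - (∫ y, τ y ∂μ) * (q n : ℝ)| := by
    intro n x0
    have hc : Continuous fun x : AddCircle (1:ℝ) =>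
        |(∑ l ∈ Finset.range (q n), τ ((⇑f)^[l] x)) - (∫ y, τ y ∂μ) * (q n : ℝ)| := by
      apply Continuous.abs
      exact (continuous_finset_sum _ fun l _ => hτ.comp (f.continuous.iterate l)).sub
        continuous_const
    have hb : BddAbove (Set.range fun x : AddCircle (1:ℝ) =>
        |(∑ l ∈ Finset.range (q n), τ ((⇑f)^[l] x)) - (∫ y, τ y ∂μ) * (q n : ℝ)|) := by
      simpa [image_univ] using isCompact_univ.bddAbove_image hc.continuousOn
    exact le_ciSup hb x0
  -- uniform continuity of the local flow chart
  have hΦc : Continuous fun pr : ℝ × AddCircle (1:ℝ) => φ pr.1 (ι pr.2) :=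
    φ.continuous continuous_fst (hι.comp continuous_snd)
  have hCcomp : IsCompact (Icc (-(Mt+1)) (Mt+1) ×ˢ (univ : Set (AddCircle (1:ℝ)))) :=
    isCompact_Icc.prod isCompact_univ
  have hUC := hCcomp.uniformContinuousOn_of_continuous hΦc.continuousOn
  rw [Metric.uniformContinuousOn_iff] at hUC
  obtain ⟨η0, hη00, hη⟩ := hUC δ hδ0
  set η := min η0 1 with hηdef
  have hη1 : 0 < η := lt_min hη00 one_pos
  have hηle1 : η ≤ 1 := min_le_right _ _
  -- uniform continuity of h.symm
  have hsUC := CompactSpace.uniformContinuous_of_continuous h.symm.continuous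
  rw [Metric.uniformContinuous_iff] at hsUC
  obtain ⟨η₂, hη₂0, hη₂⟩ := hsUC η hη1
  -- choose a good n
  have hev1 : ∀ᶠ n in atTop, (⨆ x : AddCircle (1:ℝ),
      |(∑ l ∈ Finset.range (q n), τ ((⇑f)^[l] x)) - (∫ y, τ y ∂μ) * (q n : ℝ)|) < η/2 :=
    hDK.eventually_lt_const (by positivity)
  have hev2 : ∀ᶠ n in atTop, (1:ℝ)/(q n) < η₂ := by
    obtain ⟨N, hN⟩ : ∃ N : ℕ, (1:ℝ)/η₂ < N := exists_nat_gt _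
    filter_upwards [hqmono.eventually_ge_atTop N] with n hn
    have hqn : (0:ℝ) < q n := by exact_mod_cast hq n
    rw [div_lt_iff₀ hqn]
    have h1 : (1:ℝ) < η₂ * N := by
      rw [div_lt_iff₀ hη₂0] at hN; linarith
    have h2 : (N:ℝ) ≤ q n := by exact_mod_cast hn
    nlinarith
  obtain ⟨n, hn1, hn2⟩ := (hev1.and hev2).exists
  set Q := q n with hQdef
  have hQ1 : 1 ≤ Q := hq n
  have hQpos : (0:ℝ) < Q := by exact_mod_cast hq n
  set Tn := sst f τ θ (Q:ℤ) with hTndef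
  have hTnval : Tn = ∑ l ∈ Finset.range Q, τ ((⇑f)^[l] θ) := by
    have := sst_birkhoff f τ θ 0 Q
    simpa [sst_zero, ffit_zero] using this
  -- all points move little under f^[Q]
  have hrot : ∀ w : AddCircle (1:ℝ), dist ((⇑f)^[Q] w) w < η := by
    intro w
    have h1 : h ((⇑f)^[Q] w) = (((Q:ℝ) * α : ℝ) : AddCircle (1:ℝ)) + h w := hiter Q w
    have h2 : dist (h ((⇑f)^[Q] w)) (h w) = ‖(((Q:ℝ) * α : ℝ) : AddCircle (1:ℝ))‖ := by
      rw [h1, dist_eq_norm, add_sub_cancel_right]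
    have hz : (((p n : ℤ) : ℝ) : AddCircle (1:ℝ)) = 0 := by
      rw [AddCircle.coe_eq_zero_iff]
      exact ⟨p n, by simp⟩
    have hcast : (((Q:ℝ) * α : ℝ) : AddCircle (1:ℝ))
        = (((Q:ℝ) * α - (p n : ℝ) : ℝ) : AddCircle (1:ℝ)) := by
      conv_lhs => rw [show (Q:ℝ) * α = ((Q:ℝ) * α - (p n : ℝ)) + (p n : ℝ) by ring]
      rw [AddCircle.coe_add, hz, add_zero]
    have h3 : ‖(((Q:ℝ) * α : ℝ) : AddCircle (1:ℝ))‖ ≤ |(Q:ℝ) * α - (p n : ℝ)| := by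
      rw [hcast, AddCircle.norm_eq]
      simpa using round_le ((Q:ℝ) * α - (p n : ℝ)) 0
    have h4 : |(Q:ℝ) * α - (p n : ℝ)| < 1/(Q:ℝ) := by
      have h5 : |(Q:ℝ) * α - (p n : ℝ)| = (Q:ℝ) * |α - (p n : ℝ)/(Q:ℝ)| := by
        rw [← abs_of_pos hQpos, ← abs_mul]
        congr 1
        rw [abs_of_pos hQpos]
        field_simp
      rw [h5]
      have h6 := hconv n
      calc (Q:ℝ) * |α - (p n : ℝ)/(Q:ℝ)| < (Q:ℝ) * (1/(Q:ℝ)^2) := by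
            exact mul_lt_mul_of_pos_left h6 hQpos
        _ = 1/(Q:ℝ) := by field_simp
    have h7 : dist (h ((⇑f)^[Q] w)) (h w) < η₂ := by
      rw [h2]; exact lt_of_le_of_lt h3 (lt_trans h4 hn2)
    have h8 := hη₂ h7
    simpa using h8
  -- the two orbits stay δ-close forever
  have hclose : ∀ t : ℝ, dist (φ t (ι θ)) (φ t (φ Tn (ι θ))) < δ := by
    intro t
    obtain ⟨k, hk1, hk2⟩ := hfloor t
    set u := t - sst f τ θ k with hu
    have hu0 : 0 ≤ u := by simp only [hu]; linarith
    have huM : u ≤ Mt := by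
      have h5 := sst_succ f τ θ k
      have h6 := hMhigh (ffit f θ k)
      simp only [hu]
      linarith
    set e := Tn - ∑ l ∈ Finset.range Q, τ ((⇑f)^[l] (ffit f θ k)) with he
    have hek : |e| < η := by
      have b1 := hbdd n θ
      have b2 := hbdd n (ffit f θ k)
      have h5 : e = ((∑ l ∈ Finset.range Q, τ ((⇑f)^[l] θ)) - (∫ y, τ y ∂μ) * (Q:ℝ))
          - ((∑ l ∈ Finset.range Q, τ ((⇑f)^[l] (ffit f θ k))) - (∫ y, τ y ∂μ) * (Q:ℝ)) := by
        rw [he, hTnval]; ring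
      rw [h5]
      calc |_ - _| ≤ |(∑ l ∈ Finset.range Q, τ ((⇑f)^[l] θ)) - (∫ y, τ y ∂μ) * (Q:ℝ)|
            + |(∑ l ∈ Finset.range Q, τ ((⇑f)^[l] (ffit f θ k))) - (∫ y, τ y ∂μ) * (Q:ℝ)| :=
            abs_sub _ _
        _ < η/2 + η/2 := by
            refine add_lt_add (lt_of_le_of_lt b1 hn1) (lt_of_le_of_lt b2 hn1)
        _ = η := by ring
    have hA : φ t (ι θ) = φ u (ι (ffit f θ k)) := by
      conv_lhs => rw [show t = u + sst f τ θ k by simp only [hu]; ring]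
      rw [φ.map_add, horb k]
    have hSkQ := sst_birkhoff f τ θ k Q
    have hB : φ t (φ Tn (ι θ)) = φ (u + e) (ι (ffit f θ (k + Q))) := by
      rw [← φ.map_add, ← horb (k + Q), ← φ.map_add]
      congr 1
      rw [hSkQ, he]
      simp only [hu]
      ring
    rw [hA, hB]
    have hmem1 : ((u, ffit f θ k) : ℝ × AddCircle (1:ℝ))
        ∈ Icc (-(Mt+1)) (Mt+1) ×ˢ (univ : Set (AddCircle (1:ℝ))) := by
      rw [Set.mem_prod, Set.mem_Icc]
      exact ⟨⟨by linarith, by linarith⟩, trivial⟩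
    have heabs : -1 ≤ e ∧ e ≤ 1 := by
      have := abs_le.1 (le_of_lt (lt_of_lt_of_le hek hηle1))
      exact this
    have hmem2 : ((u + e, ffit f θ (k + Q)) : ℝ × AddCircle (1:ℝ))
        ∈ Icc (-(Mt+1)) (Mt+1) ×ˢ (univ : Set (AddCircle (1:ℝ))) := by
      rw [Set.mem_prod, Set.mem_Icc]
      refine ⟨⟨?_, ?_⟩, trivial⟩
      · show -(Mt+1) ≤ u + e
        linarith [heabs.1]
      · show u + e ≤ Mt+1
        linarith [heabs.2]
    have hdistp : dist ((u, ffit f θ k) : ℝ × AddCircle (1:ℝ)) (u + e, ffit f θ (k + Q)) < η0 := by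
      refine lt_of_lt_of_le ?_ (min_le_left η0 1)
      rw [Prod.dist_eq]
      apply max_lt
      · rw [Real.dist_eq, show u - (u + e) = -e by ring, abs_neg]
        exact hek
      · rw [ffit_add_nat, dist_comm]
        exact hrot _
    exact hη (u, ffit f θ k) hmem1 (u + e, ffit f θ (k + Q)) hmem2 hdistp
  -- apply kinematic expansiveness
  obtain ⟨s, hs, hy⟩ := hδ (ι θ) (φ Tn (ι θ)) hclose
  have hTnm : m ≤ Tn := by
    have h1 := hSnat Q
    have h2 : (1:ℝ) ≤ Q := by exact_mod_cast hQ1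
    nlinarith
  have hc0 : 0 < Tn - s := by
    have := le_abs_self s
    linarith
  -- a genuine periodic orbit would arise
  have hper : φ (Tn - s) (ι θ) = ι θ := by
    have h1 : φ (Tn - s) (ι θ) = φ (-s) (φ Tn (ι θ)) := by
      rw [← φ.map_add]; ring_nf
    rw [h1, hy, ← φ.map_add, neg_add_cancel, φ.map_zero_apply]
  set c := Tn - s with hcdef
  obtain ⟨k, hk1, hk2⟩ := hfloor c
  have hk0 : 0 ≤ k := by
    by_contra hneg
    push_neg at hneg
    have hz : k + 1 ≤ 0 := by omega
    have h1 : k + 1 = -((-(k+1)).toNat : ℤ) := by omega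
    have h2 := hSneg (-(k+1)).toNat
    rw [← h1] at h2
    have h3 : (0:ℝ) ≤ m * ((-(k+1)).toNat : ℕ) := by positivity
    linarith
  have hv : φ (c - sst f τ θ k) (ι (ffit f θ k)) = ι θ := by
    calc φ (c - sst f τ θ k) (ι (ffit f θ k))
        = φ (c - sst f τ θ k) (φ (sst f τ θ k) (ι θ)) := by rw [horb]
      _ = φ ((c - sst f τ θ k) + sst f τ θ k) (ι θ) := (φ.map_add _ _ _).symm
      _ = φ c (ι θ) := by rw [sub_add_cancel]
      _ = ι θ := hper
  have hv0 : c - sst f τ θ k = 0 := by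
    by_contra hne
    have hpos : 0 < c - sst f τ θ k := lt_of_le_of_ne (by linarith) (Ne.symm hne)
    have hlt : c - sst f τ θ k < τ (ffit f θ k) := by
      have := sst_succ f τ θ k
      linarith
    exact hmin (ffit f θ k) _ hpos hlt ⟨θ, hv.symm⟩
  have hFk : ffit f θ k = θ := by
    apply hιinj
    have h1 := hv
    rw [hv0, φ.map_zero_apply] at h1
    exact h1
  have hk1' : 1 ≤ k := by
    rcases lt_or_ge k 1 with hk' | hk'
    · exfalso
      have hkz : k = 0 := by omega
      rw [hkz, sst_zero] at hv0
      linarith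
    · exact hk'
  have hiterfix : (⇑f)^[k.toNat] θ = θ := by
    have h1 := ffit_add_nat f θ 0 k.toNat
    rw [ffit_zero, zero_add] at h1
    have hcast : ((k.toNat : ℕ) : ℤ) = k := by omega
    rw [hcast] at h1
    rw [← h1, hFk]
  have hz : (((k.toNat : ℝ) * α : ℝ) : AddCircle (1:ℝ)) = 0 := by
    have h1 := hiter k.toNat θ
    rw [hiterfix] at h1
    exact right_eq_add.mp h1
  obtain ⟨j, hj⟩ := (AddCircle.coe_eq_zero_iff _).mp hz
  have hkt : (1:ℝ) ≤ (k.toNat : ℝ) := by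
    have : 1 ≤ k.toNat := by omega
    exact_mod_cast this
  have hktne : (k.toNat : ℝ) ≠ 0 := by linarith
  have hαval : α = (j : ℝ) / (k.toNat : ℝ) := by
    have h1 : (j : ℝ) = (k.toNat : ℝ) * α := by
      have := hj
      rw [zsmul_eq_mul, mul_one] at this
      exact this
    field_simp
    linarith [h1]
  exact hα ⟨(j : ℚ) / (k.toNat : ℚ), by push_cast; rw [hαval]⟩
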